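/- Let P > 0 and N > 0 be real numbers, and let FN₁, FP₁, FN₂, FP₂ be real numbers with 0 ≤ FNᵢ ≤ P and 0 ≤ FPᵢ ≤ N for i = 1, 2. Setting TPᵢ = P − FNᵢ and TNᵢ = N − FPᵢ, one has (TP₁/P)·(TN₁/N) ≥ (TP₂/P)·(TN₂/N) if and only if (N/P)·FN₁ + ((P − FN₁)/P)·FP₁ ≤ (N/P)·FN₂ + ((P − FN₂)/P)·FP₂. Hence maximizing the squared G-mean is equivalent to minimizing the objective (N/P)·FN + ((P − FN)/P)·FP. -/

import Mathlib

theorem gmean_max_iff_weighted_min (P N : ℝ) (hP : 0 < P) (hN : 0 < N)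
    (FN₁ FP₁ FN₂ FP₂ : ℝ)
    (hFN₁ : 0 ≤ FN₁) (hFN₁' : FN₁ ≤ P) (hFP₁ : 0 ≤ FP₁) (hFP₁' : FP₁ ≤ N)
    (hFN₂ : 0 ≤ FN₂) (hFN₂' : FN₂ ≤ P) (hFP₂ : 0 ≤ FP₂) (hFP₂' : FP₂ ≤ N)
    (TP₁ TN₁ TP₂ TN₂ : ℝ)
    (hTP₁ : TP₁ = P - FN₁) (hTN₁ : TN₁ = N - FP₁)
    (hTP₂ : TP₂ = P - FN₂) (hTN₂ : TN₂ = N - FP₂) :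
    (TP₁ / P) * (TN₁ / N) ≥ (TP₂ / P) * (TN₂ / N) ↔
      (N / P) * FN₁ + ((P - FN₁) / P) * FP₁ ≤
        (N / P) * FN₂ + ((P - FN₂) / P) * FP₂ := by
  subst hTP₁ hTN₁ hTP₂ hTN₂
  rw [ge_iff_le, div_mul_div_comm, div_mul_div_comm,
    div_le_div_iff₀ (by positivity) (by positivity),
    div_mul_eq_mul_div, div_mul_eq_mul_div, div_mul_eq_mul_div, div_mul_eq_mul_div,
    ← add_div, ← add_div, div_le_div_iff₀ hP hP]
  constructor <;> intro h <;> nlinarith [mul_pos hP hN]
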